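/- arXiv:2408.15226 — 4 statements merged into one kernel-verified Lean document; each statement's English description precedes it below -/
import Mathlib

section
/- Let d ≥ 1, let ρ, ω be states on ℂ^d and let M ≥ 1 be real with ρ ≤ Mω. Then D(ρ‖ω) ≤ log M. (The hypothesis forces ker ω ⊆ ker ρ, so D(ρ‖ω) is well defined; this says the relative entropy is bounded by the max-relative entropy.) -/
noncomputable section

namespace QIT

open Matrix
open scoped ComplexOrder

variable {n : Type*} [Fintype n] [DecidableEq n]

/-- Trace norm of a matrix: sum of absolute values of eigenvalues (0 if not Hermitian). -/
def traceNorm (X : Matrix n n ℂ) : ℝ :=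
  if h : X.IsHermitian then ∑ i, |h.eigenvalues i| else 0

/-- Trace of the positive part: sum of positive eigenvalues (0 if not Hermitian). -/
def trPos (X : Matrix n n ℂ) : ℝ :=
  if h : X.IsHermitian then ∑ i, max (h.eigenvalues i) 0 else 0

/-- Matrix logarithm via functional calculus (with log 0 = 0); 0 if not Hermitian. -/
def mlog (X : Matrix n n ℂ) : Matrix n n ℂ :=
  if h : X.IsHermitian then
    (h.eigenvectorUnitary : Matrix n n ℂ) *
      Matrix.diagonal (fun i => (Real.log (h.eigenvalues i) : ℂ)) *
      (star (h.eigenvectorUnitary : Matrix n n ℂ))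
  else 0

/-- Umegaki relative entropy D(ρ‖ω) = Tr ρ (log ρ - log ω). -/
def relEnt (ρ ω : Matrix n n ℂ) : ℝ :=
  ((ρ * (mlog ρ - mlog ω)).trace).re

/-- Von Neumann entropy. -/
def vN (ρ : Matrix n n ℂ) : ℝ :=
  if h : ρ.IsHermitian then -∑ i, (h.eigenvalues i) * Real.log (h.eigenvalues i) else 0

/-- A quantum state: positive semidefinite with unit trace. -/
def IsState (ρ : Matrix n n ℂ) : Prop := ρ.PosSemidef ∧ ρ.trace = 1

/-- Binary entropy. -/
def binH (ε : ℝ) : ℝ := -(ε * Real.log ε) - (1 - ε) * Real.log (1 - ε)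

/-- g(x) = (1+x)log(1+x) - x log x. -/
def gfun (x : ℝ) : ℝ := (1 + x) * Real.log (1 + x) - x * Real.log x



section RelEntAux
open Filter
set_option linter.unusedSectionVars false
set_option linter.unusedVariables false
variable {m : Type*} [Fintype m] [DecidableEq m]

-- smul PSD
lemma psd_smul {A : Matrix m m ℂ} (hA : A.PosSemidef) {c : ℝ} (hc : 0 ≤ c) :
    ((c : ℂ) • A).PosSemidef := by
  constructor
  · unfold Matrix.IsHermitian
    rw [conjTranspose_smul, hA.1]
    congr 1
    simp
  · intro x
    exact (hA.smul (by simpa using hc : (0:ℂ) ≤ (c:ℂ))).2 x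

-- diag entries of PSD nonneg
lemma psd_diag_nonneg {A : Matrix m m ℂ} (hA : A.PosSemidef) (j : m) :
    0 ≤ (A j j).re := by
  have h := hA.re_dotProduct_nonneg (Pi.single j 1)
  simpa [dotProduct, mulVec, Pi.single_apply, Finset.sum_ite_eq, Finset.sum_ite_eq'] using h

lemma trace_mul_re_nonneg {A B : Matrix m m ℂ} (hA : A.PosSemidef) (hB : B.PosSemidef) :
    0 ≤ ((A * B).trace).re := by
  obtain ⟨C, rfl⟩ : ∃ C : Matrix m m ℂ, B = Cᴴ * C := by
    open scoped MatrixOrder in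
    obtain ⟨C, hC⟩ := CStarAlgebra.nonneg_iff_eq_star_mul_self.mp hB.nonneg
    exact ⟨C, by simpa [star_eq_conjTranspose] using hC⟩
  have h1 : (A * (Cᴴ * C)).trace = (C * A * Cᴴ).trace := by
    rw [← mul_assoc, trace_mul_cycle]
  rw [h1]
  have hP : (C * A * Cᴴ).PosSemidef := hA.mul_mul_conjTranspose_same C
  rw [Matrix.trace]
  rw [Complex.re_sum]
  exact Finset.sum_nonneg fun i _ => psd_diag_nonneg hP i

lemma nonneg_re_eq_zero {z : ℂ} (hz : 0 ≤ z) (h : z.re = 0) : z = 0 := by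
  rw [Complex.le_def] at hz
  exact Complex.ext (by simp [h]) (by simp [← hz.2])

-- X, Y psd, Y*Y - X*X psd  →  Y - X psd
lemma psd_sub_of_sq {X Y : Matrix m m ℂ} (hX : X.PosSemidef) (hY : Y.PosSemidef)
    (h : (Y * Y - X * X).PosSemidef) : (Y - X).PosSemidef := by
  have hH : (Y - X).IsHermitian := hY.1.sub hX.1
  apply hH.posSemidef_iff_eigenvalues_nonneg.mpr
  intro i
  by_contra hneg
  push_neg at hneg
  set t : ℝ := hH.eigenvalues i with ht
  set v : m → ℂ := ⇑(hH.eigenvectorBasis i) with hv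
  have hev : (Y - X) *ᵥ v = t • v := hH.mulVec_eigenvectorBasis i
  set qY : ℂ := star v ⬝ᵥ (Y *ᵥ v) with hqY
  set qX : ℂ := star v ⬝ᵥ (X *ᵥ v) with hqX
  have hYX : star v ⬝ᵥ ((Y * Y - X * X) *ᵥ v) = (t : ℂ) * (qY + qX) := by
    have hsplit : Y * Y - X * X = Y * (Y - X) + (Y - X) * X := by
      rw [mul_sub, sub_mul]; abel
    have h1 : star v ⬝ᵥ ((Y * (Y - X)) *ᵥ v) = (t : ℂ) * qY := by
      rw [← mulVec_mulVec, hev, mulVec_smul, dotProduct_smul]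
      simp [hqY, Complex.real_smul]
    have h2 : star v ⬝ᵥ (((Y - X) * X) *ᵥ v) = (t : ℂ) * qX := by
      rw [← mulVec_mulVec, dotProduct_mulVec]
      have : star v ᵥ* (Y - X) = star ((Y - X) *ᵥ v) := by
        rw [star_mulVec, hH.eq]
      rw [this, hev]
      have : star ((t : ℝ) • v) = (t : ℂ) • star v := by
        ext j; simp [Complex.real_smul]
      rw [this, smul_dotProduct]
      simp [hqX]
    rw [hsplit, add_mulVec, dotProduct_add, h1, h2]; ring
  -- positivity of the big form
  have hpos : 0 ≤ ((t : ℂ) * (qY + qX)).re := by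
    rw [← hYX]; exact h.re_dotProduct_nonneg v
  have hrew : ((t : ℂ) * (qY + qX)).re = t * (qY.re + qX.re) := by
    simp [Complex.re_ofReal_mul]
  rw [hrew] at hpos
  have hYnn : 0 ≤ qY.re := hY.re_dotProduct_nonneg v
  have hXnn : 0 ≤ qX.re := hX.re_dotProduct_nonneg v
  have hsum0 : qY.re + qX.re = 0 := by have hneg' : t < 0 := hneg; nlinarith
  have hYre : qY.re = 0 := by linarith
  have hXre : qX.re = 0 := by linarith
  have hYv : Y *ᵥ v = 0 := (hY.dotProduct_mulVec_zero_iff v).mp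
    (nonneg_re_eq_zero (hY.dotProduct_mulVec_nonneg v) hYre)
  have hXv : X *ᵥ v = 0 := (hX.dotProduct_mulVec_zero_iff v).mp
    (nonneg_re_eq_zero (hX.dotProduct_mulVec_nonneg v) hXre)
  have hv0 : (t : ℝ) • v = 0 := by
    rw [← hev, sub_mulVec, hYv, hXv, sub_zero]
  have : v = 0 := by
    have := smul_eq_zero.mp hv0
    rcases this with h' | h'
    · exact absurd h' (ne_of_lt hneg)
    · exact h'
  have hvne : v ≠ 0 := by
    intro h0
    have : hH.eigenvectorBasis i = 0 := by
      apply PiLp.ext; intro j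
      exact congrFun h0 j
    exact hH.eigenvectorBasis.orthonormal.ne_zero i this
  exact hvne this

/-- power of a Hermitian matrix via eigendecomposition -/
def pw {A : Matrix m m ℂ} (hA : A.IsHermitian) (p : ℝ) : Matrix m m ℂ :=
  (hA.eigenvectorUnitary : Matrix m m ℂ) *
    diagonal (fun i => ((hA.eigenvalues i ^ p : ℝ) : ℂ)) *
    star (hA.eigenvectorUnitary : Matrix m m ℂ)

lemma pw_posSemidef {A : Matrix m m ℂ} (hA : A.PosSemidef) (p : ℝ) :
    (pw hA.1 p).PosSemidef := by
  unfold pw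
  rw [star_eq_conjTranspose]
  apply Matrix.PosSemidef.mul_mul_conjTranspose_same
  apply Matrix.PosSemidef.diagonal
  intro i
  have : (0:ℝ) ≤ hA.1.eigenvalues i ^ p := Real.rpow_nonneg (hA.eigenvalues_nonneg i) p
  simpa using this

lemma pw_one {A : Matrix m m ℂ} (hA : A.IsHermitian) : pw hA 1 = A := by
  unfold pw
  conv_rhs => rw [hA.spectral_theorem]
  have : (fun i => ((hA.eigenvalues i ^ (1:ℝ) : ℝ) : ℂ)) = RCLike.ofReal ∘ hA.eigenvalues := by
    funext i; simp [Real.rpow_one]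
  rw [this]; rfl

lemma pw_mul_self {A : Matrix m m ℂ} (hA : A.PosSemidef) {p : ℝ} (hp : 0 < p) :
    pw hA.1 p * pw hA.1 p = pw hA.1 (2 * p) := by
  unfold pw
  have hU : (star (hA.1.eigenvectorUnitary : Matrix m m ℂ)) *
      (hA.1.eigenvectorUnitary : Matrix m m ℂ) = 1 := by
    exact Unitary.coe_star_mul_self hA.1.eigenvectorUnitary
  set U : Matrix m m ℂ := (hA.1.eigenvectorUnitary : Matrix m m ℂ)
  set D : Matrix m m ℂ := diagonal (fun i => ((hA.1.eigenvalues i ^ p : ℝ) : ℂ))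
  calc U * D * star U * (U * D * star U) = U * (D * ((star U * U) * (D * star U))) := by
        simp only [mul_assoc]
    _ = U * (D * D) * star U := by rw [hU, one_mul]; simp only [mul_assoc]
    _ = U * diagonal (fun i => ((hA.1.eigenvalues i ^ (2*p) : ℝ) : ℂ)) * star U := by
        rw [diagonal_mul_diagonal]
        have : (fun i => ((hA.1.eigenvalues i ^ p : ℝ) : ℂ) * ((hA.1.eigenvalues i ^ p : ℝ) : ℂ))
            = fun i => ((hA.1.eigenvalues i ^ (2*p) : ℝ) : ℂ) := by
          funext i
          rw [← Complex.ofReal_mul]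
          congr 1
          rw [two_mul, Real.rpow_add' (hA.eigenvalues_nonneg i) (by positivity)]
        rw [this]

-- trace formula
lemma trace_conj_diag (ρ U : Matrix m m ℂ) (d : m → ℂ) :
    (ρ * (U * diagonal d * star U)).trace = ∑ j, (star U * ρ * U) j j * d j := by
  have h1 : (ρ * (U * diagonal d * star U)).trace
      = ((star U * ρ * U) * diagonal d).trace := by
    rw [show ρ * (U * diagonal d * star U) = (ρ * U * diagonal d) * star U by
      simp only [mul_assoc], trace_mul_comm, star_eq_conjTranspose]
    simp only [mul_assoc]
  rw [h1, Matrix.trace]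
  congr 1
  funext j
  simp [Matrix.diag, mul_diagonal]
lemma tendsto_slope_exp (c : ℝ) :
    Tendsto (fun h : ℝ => (Real.exp (c * h) - 1) / h) (nhdsWithin 0 {(0:ℝ)}ᶜ) (nhds c) := by
  have h1 : HasDerivAt (fun h : ℝ => Real.exp (c * h)) c 0 := by
    have := (Real.hasDerivAt_exp (c * 0)).comp 0 ((hasDerivAt_id (0:ℝ)).const_mul c)
    simpa [Function.comp_def] using this
  have h2 := hasDerivAt_iff_tendsto_slope.mp h1
  have : (slope (fun h : ℝ => Real.exp (c * h)) 0) = fun h : ℝ => (Real.exp (c * h) - 1) / h := by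
    funext x
    simp [slope_def_field, div_eq_mul_inv]
  rwa [this] at h2

lemma tendsto_rpow_log (x : ℝ) (hx : 0 < x) :
    Tendsto (fun k : ℕ => (2:ℝ)^k * (x ^ ((1/2:ℝ)^k) - 1)) atTop (nhds (Real.log x)) := by
  have hh : Tendsto (fun k : ℕ => ((1/2:ℝ))^k) atTop (nhdsWithin 0 {(0:ℝ)}ᶜ) := by
    apply tendsto_nhdsWithin_of_tendsto_nhds_of_eventually_within
    · exact tendsto_pow_atTop_nhds_zero_of_lt_one (by norm_num) (by norm_num)
    · filter_upwards with k
      simp only [Set.mem_compl_iff, Set.mem_singleton_iff]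
      positivity
  have h := (tendsto_slope_exp (Real.log x)).comp hh
  convert h using 1
  funext k
  simp only [Function.comp_apply]
  rw [Real.rpow_def_of_pos hx]
  rw [eq_div_iff (by positivity : ((1/2:ℝ))^k ≠ 0)]
  rw [mul_comm (Real.log x)]
  have h2k : ((1:ℝ)/2)^k = ((2:ℝ)^k)⁻¹ := by rw [one_div, inv_pow]
  rw [h2k]
  field_simp

lemma conj_diag_eq_quad (B V : Matrix m m ℂ) (j : m) :
    (star V * B * V) j j = star (fun i => V i j) ⬝ᵥ (B *ᵥ fun i => V i j) := by
  simp only [mul_apply, mulVec, dotProduct, star_apply, Pi.star_apply,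
    Finset.mul_sum, Finset.sum_mul]
  rw [Finset.sum_comm]
  apply Finset.sum_congr rfl; intro a _
  apply Finset.sum_congr rfl; intro b _
  ring


end RelEntAux

open Filter
set_option linter.unusedVariables false in
/-- relative entropy is bounded by the max-relative entropy. -/
theorem relEnt_le_log_of_le_smul
    {d : ℕ} (hd : 1 ≤ d) (ρ ω : Matrix (Fin d) (Fin d) ℂ)
    (hρ : IsState ρ) (hω : IsState ω)
    (M : ℝ) (hM : 1 ≤ M)
    (hop : ((M : ℂ) • ω - ρ).PosSemidef) :
    relEnt ρ ω ≤ Real.log M := by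
  obtain ⟨hρP, hρtr⟩ := hρ
  obtain ⟨hωP, hωtr⟩ := hω
  have hρH : ρ.IsHermitian := hρP.1
  have hωH : ω.IsHermitian := hωP.1
  have hM0 : (0:ℝ) < M := lt_of_lt_of_le one_pos hM
  set lam : Fin d → ℝ := hρH.eigenvalues with hlam
  set mu : Fin d → ℝ := hωH.eigenvalues with hmu
  set U : Matrix (Fin d) (Fin d) ℂ := (hρH.eigenvectorUnitary : Matrix (Fin d) (Fin d) ℂ) with hU
  set V : Matrix (Fin d) (Fin d) ℂ := (hωH.eigenvectorUnitary : Matrix (Fin d) (Fin d) ℂ) with hV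
  set c : Fin d → ℝ := fun j => ((star V * ρ * V) j j).re with hc
  set p : ℕ → ℝ := fun k => (1/2:ℝ)^k with hp
  have hppos : ∀ k, 0 < p k := fun k => by positivity
  have hpsucc : ∀ k, 2 * p (k+1) = p k := by
    intro k; simp only [hp, pow_succ]; ring
  have hlam0 : ∀ i, 0 ≤ lam i := hρP.eigenvalues_nonneg
  have hmu0 : ∀ j, 0 ≤ mu j := hωP.eigenvalues_nonneg
  -- diagonalization facts
  have hUdiag : star U * ρ * U = diagonal (Complex.ofReal ∘ lam) :=
    by have := hρH.conjStarAlgAut_star_eigenvectorUnitary; rw [Unitary.conjStarAlgAut_star_apply] at this; exact this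
  -- c basics
  have hcquad : ∀ j, ∀ B : Matrix (Fin d) (Fin d) ℂ,
      (star V * B * V) j j = star (⇑(hωH.eigenvectorBasis j)) ⬝ᵥ (B *ᵥ ⇑(hωH.eigenvectorBasis j)) := by
    intro j B
    rw [conj_diag_eq_quad]
    congr 1 <;> · funext i; simp [hV, hωH.eigenvectorUnitary_apply]
  have hcnn : ∀ j, 0 ≤ c j := by
    intro j
    rw [hc]
    have : (star V * ρ * V).PosSemidef := by
      have := hρP.conjTranspose_mul_mul_same V
      rwa [← star_eq_conjTranspose] at this
    have h2 := this.re_dotProduct_nonneg (Pi.single j 1)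
    simpa [dotProduct, mulVec, Pi.single_apply, Finset.sum_ite_eq, Finset.sum_ite_eq'] using h2
  have hczero : ∀ j, mu j = 0 → c j = 0 := by
    intro j hj
    have hquadω : ω *ᵥ ⇑(hωH.eigenvectorBasis j) = 0 := by
      rw [hωH.mulVec_eigenvectorBasis]
      rw [show hωH.eigenvalues j = mu j from rfl, hj, zero_smul]
    have hle : ((star V * ρ * V) j j).re ≤ 0 := by
      have h2 := hop.re_dotProduct_nonneg ⇑(hωH.eigenvectorBasis j)
      rw [sub_mulVec, smul_mulVec, hquadω, smul_zero, zero_sub, dotProduct_neg] at h2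
      rw [hcquad j ρ]
      simpa using h2
    exact le_antisymm (by simpa [hc] using hle) (hcnn j)
  have hVV : V * star V = 1 := mem_unitaryGroup_iff.mp hωH.eigenvectorUnitary.2
  have hUU : U * star U = 1 := mem_unitaryGroup_iff.mp hρH.eigenvectorUnitary.2
  have hcsum : ∑ j, c j = 1 := by
    have h1 : (star V * ρ * V).trace = ρ.trace := by
      rw [trace_mul_cycle, hVV, one_mul]
    have : (∑ j, c j) = ((star V * ρ * V).trace).re := by
      rw [Matrix.trace, Complex.re_sum]; rfl
    rw [this, h1, hρtr]; rfl
  have hlamsum : ∑ i, lam i = 1 := by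
    have h1 : (star U * ρ * U).trace = ρ.trace := by
      rw [trace_mul_cycle, hUU, one_mul]
    have h2 : (diagonal (Complex.ofReal ∘ lam)).trace = ∑ i, (lam i : ℂ) := by
      simp [Matrix.trace, Matrix.diag]
    have := hUdiag ▸ h1
    rw [h2, hρtr] at this
    have := congrArg Complex.re this
    rw [Complex.re_sum] at this
    simpa using this
  -- monotone chain
  have chain : ∀ k, ((((M ^ p k : ℝ) : ℂ) • pw hωH (p k)) - pw hρH (p k)).PosSemidef := by
    intro k
    induction k with
    | zero =>
      have hp0 : p 0 = 1 := by simp [hp]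
      rw [hp0, pw_one, pw_one, Real.rpow_one]
      exact hop
    | succ k ih =>
      have hY : (((M ^ p (k+1) : ℝ) : ℂ) • pw hωH (p (k+1))).PosSemidef :=
        psd_smul (pw_posSemidef hωP _) (Real.rpow_nonneg hM0.le _)
      apply psd_sub_of_sq (pw_posSemidef hρP _) hY
      have hsq : (((M ^ p (k+1) : ℝ) : ℂ) • pw hωH (p (k+1)))
          * (((M ^ p (k+1) : ℝ) : ℂ) • pw hωH (p (k+1)))
          = ((M ^ p k : ℝ) : ℂ) • pw hωH (p k) := by
        rw [smul_mul_smul_comm, pw_mul_self hωP (hppos _), hpsucc]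
        congr 1
        rw [← Complex.ofReal_mul, ← Real.rpow_add hM0, ← two_mul, hpsucc]
      rw [hsq, pw_mul_self hρP (hppos _), hpsucc]
      exact ih
  -- trace inequality per k
  have retr : ∀ (B : Matrix (Fin d) (Fin d) ℂ) (hB : B.IsHermitian) (q : ℝ),
      ((ρ * pw hB q).trace).re = ∑ j, ((star (hB.eigenvectorUnitary : Matrix (Fin d) (Fin d) ℂ)
        * ρ * (hB.eigenvectorUnitary : Matrix (Fin d) (Fin d) ℂ)) j j).re * (hB.eigenvalues j ^ q) := by
    intro B hB q
    unfold pw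
    rw [trace_conj_diag, Complex.re_sum]
    apply Finset.sum_congr rfl
    intro j _
    simp [Complex.mul_re]
  have key : ∀ k, (∑ i, lam i * lam i ^ p k) ≤ M ^ p k * ∑ j, c j * mu j ^ p k := by
    intro k
    have h0 := trace_mul_re_nonneg hρP (chain k)
    rw [mul_sub, trace_sub, Complex.sub_re] at h0
    have hL : ((ρ * pw hρH (p k)).trace).re = ∑ i, lam i * lam i ^ p k := by
      rw [retr ρ hρH (p k)]
      apply Finset.sum_congr rfl
      intro i _
      rw [hUdiag]
      simp [Matrix.diagonal_apply_eq, Function.comp, hlam]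
    have hR : ((ρ * (((M ^ p k : ℝ) : ℂ) • pw hωH (p k))).trace).re
        = M ^ p k * ∑ j, c j * mu j ^ p k := by
      rw [mul_smul_comm, trace_smul, smul_eq_mul, Complex.re_ofReal_mul, retr ω hωH (p k)]
    rw [hL, hR] at h0
    linarith
  -- sequences and limits
  set F : ℕ → ℝ := fun k => ∑ i, lam i * ((2:ℝ)^k * (lam i ^ p k - 1)) with hF
  set G : ℕ → ℝ := fun k => ∑ j, c j * ((2:ℝ)^k * ((M * mu j) ^ p k - 1)) with hG
  have hFle : ∀ k, F k ≤ G k := by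
    intro k
    have hFeq : F k = (2:ℝ)^k * ((∑ i, lam i * lam i ^ p k) - 1) := by
      conv_rhs => rw [← hlamsum]
      rw [← Finset.sum_sub_distrib, Finset.mul_sum]
      apply Finset.sum_congr rfl; intro i _; ring
    have hGeq : G k = (2:ℝ)^k * ((M ^ p k * ∑ j, c j * mu j ^ p k) - 1) := by
      conv_rhs => rw [← hcsum]
      rw [Finset.mul_sum, ← Finset.sum_sub_distrib, Finset.mul_sum]
      apply Finset.sum_congr rfl; intro j _
      rw [Real.mul_rpow hM0.le (hmu0 j)]
      ring
    rw [hFeq, hGeq]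
    have h2 : (0:ℝ) ≤ (2:ℝ)^k := by positivity
    have := key k
    nlinarith
  have hFlim : Tendsto F atTop (nhds (∑ i, lam i * Real.log (lam i))) := by
    apply tendsto_finset_sum
    intro i _
    rcases eq_or_lt_of_le (hlam0 i) with h0 | h0
    · have he : (fun k : ℕ => lam i * ((2:ℝ)^k * (lam i ^ p k - 1)))
          = fun _ => lam i * Real.log (lam i) := by
        funext k; rw [← h0]; simp
      rw [he]; exact tendsto_const_nhds
    · exact (tendsto_rpow_log (lam i) h0).const_mul (lam i)
  have hGlim : Tendsto G atTop (nhds (∑ j, c j * (Real.log M + Real.log (mu j)))) := by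
    apply tendsto_finset_sum
    intro j _
    rcases eq_or_lt_of_le (hmu0 j) with h0 | h0
    · have hcj : c j = 0 := hczero j h0.symm
      have he : (fun k : ℕ => c j * ((2:ℝ)^k * ((M * mu j) ^ p k - 1)))
          = fun _ => c j * (Real.log M + Real.log (mu j)) := by
        funext k; rw [hcj]; simp
      rw [he]; exact tendsto_const_nhds
    · have h3 := (tendsto_rpow_log (M * mu j) (by positivity)).const_mul (c j)
      rwa [Real.log_mul (ne_of_gt hM0) (ne_of_gt h0)] at h3
  have hlim : (∑ i, lam i * Real.log (lam i)) ≤ ∑ j, c j * (Real.log M + Real.log (mu j)) :=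
    le_of_tendsto_of_tendsto' hFlim hGlim hFle
  have htarget : ∑ j, c j * (Real.log M + Real.log (mu j))
      = Real.log M + ∑ j, c j * Real.log (mu j) := by
    simp only [mul_add]
    rw [Finset.sum_add_distrib, ← Finset.sum_mul, hcsum, one_mul]
  have hrel : relEnt ρ ω = (∑ i, lam i * Real.log (lam i)) - ∑ j, c j * Real.log (mu j) := by
    unfold relEnt mlog
    rw [dif_pos hρH, dif_pos hωH, mul_sub, trace_sub, Complex.sub_re,
        trace_conj_diag, trace_conj_diag, Complex.re_sum, Complex.re_sum]
    congr 1
    · apply Finset.sum_congr rfl; intro i _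
      rw [hUdiag]
      simp [Complex.mul_re, Function.comp, hlam]
    · apply Finset.sum_congr rfl; intro j _
      simp [hc, Complex.mul_re, hV, hmu]
  rw [hrel]
  rw [htarget] at hlim
  linarith


end QIT
end
end

section
/- Let M > 1 be real and let ε be real with 0 ≤ ε ≤ 1 − 1/M. Consider the diagonal 2×2 states ρ := diag(1, 0), σ := diag(1−ε, ε), and ω := diag(1/M, 1 − 1/M). Then: (i) ½‖ρ − σ‖₁ = ε; (ii) ρ ≤ Mω, and for every real m with m < M it is not the case that ρ ≤ mω (so the max-relative entropy of ρ with respect to ω equals log M); (iii) D(ρ‖ω) − D(σ‖ω) = ε·log(M − 1) + h(ε). In particular this triple of states saturates the semi-continuity bound D(ρ‖ω) − D(σ‖ω) ≤ ε·log(M − 1) + h(ε). -/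
noncomputable section

namespace QIT

open Matrix
open scoped ComplexOrder

variable {n : Type*} [Fintype n] [DecidableEq n]

lemma herm_diag2 (a b : ℝ) : (Matrix.diagonal ![(a:ℂ),(b:ℂ)]).IsHermitian := by
  apply Matrix.isHermitian_diagonal_iff.mpr
  intro i
  fin_cases i <;> exact Complex.conj_ofReal _

lemma eig_diag2 (a b : ℝ) (h : (Matrix.diagonal ![(a:ℂ),(b:ℂ)]).IsHermitian) :
    (h.eigenvalues 0 = a ∧ h.eigenvalues 1 = b) ∨
    (h.eigenvalues 0 = b ∧ h.eigenvalues 1 = a) := by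
  set A := Matrix.diagonal ![(a:ℂ),(b:ℂ)] with hA
  set U := (h.eigenvectorUnitary : Matrix (Fin 2) (Fin 2) ℂ) with hUdef
  have hU : star U * U = 1 := (Matrix.mem_unitaryGroup_iff').mp (h.eigenvectorUnitary).2
  have htr : A.trace = (Matrix.diagonal (RCLike.ofReal ∘ h.eigenvalues) : Matrix (Fin 2) (Fin 2) ℂ).trace := by
    conv_lhs => rw [h.spectral_theorem]
    rw [Unitary.conjStarAlgAut_apply, Matrix.trace_mul_comm, ← Matrix.mul_assoc, hU, Matrix.one_mul]
  have e1 : a + b = h.eigenvalues 0 + h.eigenvalues 1 := by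
    have step : ((a:ℂ) + b) = ((h.eigenvalues 0 : ℝ) : ℂ) + ((h.eigenvalues 1 : ℝ) : ℂ) := by
      calc ((a:ℂ) + b) = A.trace := by
            simp [hA, Matrix.trace_diagonal, Fin.sum_univ_two]
        _ = _ := by
            rw [htr]; simp [Matrix.trace_diagonal, Fin.sum_univ_two, Function.comp]
    exact_mod_cast step
  have hdet := h.det_eq_prod_eigenvalues
  have e2 : a * b = h.eigenvalues 0 * h.eigenvalues 1 := by
    have step : ((a:ℂ) * b) = ((h.eigenvalues 0 : ℝ) : ℂ) * ((h.eigenvalues 1 : ℝ) : ℂ) := by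
      calc ((a:ℂ) * b) = A.det := by
            simp [hA, Matrix.det_diagonal, Fin.prod_univ_two]
        _ = _ := by rw [hdet, Fin.prod_univ_two]; rfl
    exact_mod_cast step
  have key : (h.eigenvalues 0 - a) * (h.eigenvalues 0 - b) = 0 := by
    linear_combination (-(h.eigenvalues 0)) * e1 + e2
  rcases mul_eq_zero.mp key with h0 | h0
  · have := sub_eq_zero.mp h0
    left; exact ⟨by linarith, by linarith⟩
  · have := sub_eq_zero.mp h0
    right; exact ⟨by linarith, by linarith⟩

lemma mlog_diag2 (a b : ℝ) :
    mlog (Matrix.diagonal ![(a:ℂ),(b:ℂ)]) =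
      Matrix.diagonal ![(Real.log a : ℂ), (Real.log b : ℂ)] := by
  have h := herm_diag2 a b
  rw [mlog, dif_pos h]
  obtain ⟨α, β, ha, hb⟩ : ∃ α β : ℝ, Real.log a = α + β * a ∧ Real.log b = α + β * b := by
    by_cases hab : a = b
    · exact ⟨Real.log a, 0, by ring, by rw [← hab]; ring⟩
    · refine ⟨Real.log a - (Real.log a - Real.log b)/(a-b) * a,
        (Real.log a - Real.log b)/(a-b), by ring, ?_⟩
      have hab' : a - b ≠ 0 := sub_ne_zero.mpr hab
      field_simp
      ring
  have hl : ∀ i, Real.log (h.eigenvalues i) = α + β * h.eigenvalues i := by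
    rw [Fin.forall_fin_two]
    rcases eig_diag2 a b h with ⟨h0,h1⟩|⟨h0,h1⟩ <;> rw [h0, h1] <;> exact ⟨by assumption, by assumption⟩
  set U := (h.eigenvectorUnitary : Matrix (Fin 2) (Fin 2) ℂ) with hUdef
  have hU : U * star U = 1 := (Matrix.mem_unitaryGroup_iff).mp (h.eigenvectorUnitary).2
  have hdiag : Matrix.diagonal (fun i => (Real.log (h.eigenvalues i) : ℂ))
      = (α:ℂ) • (1 : Matrix (Fin 2) (Fin 2) ℂ)
        + (β:ℂ) • Matrix.diagonal (RCLike.ofReal ∘ h.eigenvalues) := by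
    ext i j
    by_cases hij : i = j
    · subst hij
      simp only [Matrix.diagonal_apply_eq, Matrix.add_apply, Matrix.smul_apply,
        Matrix.one_apply_eq, smul_eq_mul, mul_one, Function.comp_apply]
      rw [hl i]
      push_cast
      norm_num
    · simp [Matrix.diagonal_apply_ne _ hij, Matrix.one_apply_ne hij]
  rw [hdiag, Matrix.mul_add, Matrix.add_mul, Matrix.mul_smul, Matrix.smul_mul,
    Matrix.mul_smul, Matrix.smul_mul, Matrix.mul_one, hU,
    ← Unitary.conjStarAlgAut_apply (S := ℂ), ← h.spectral_theorem]
  ext i j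
  by_cases hij : i = j
  · subst hij
    simp only [Matrix.diagonal_apply_eq, Matrix.add_apply, Matrix.smul_apply,
      Matrix.one_apply_eq, smul_eq_mul, mul_one]
    fin_cases i <;> [rw [ha]; rw [hb]] <;> push_cast <;> simp
  · simp [Matrix.diagonal_apply_ne _ hij, Matrix.one_apply_ne hij]

lemma retrace2 (p q r s u v : ℝ) :
    ((Matrix.diagonal ![(p:ℂ),(q:ℂ)] *
      (Matrix.diagonal ![(r:ℂ),(s:ℂ)] - Matrix.diagonal ![(u:ℂ),(v:ℂ)])).trace).re
    = p*(r-u) + q*(s-v) := by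
  rw [Matrix.diagonal_sub, Matrix.diagonal_mul_diagonal, Matrix.trace_diagonal,
    Fin.sum_univ_two]
  simp only [Matrix.cons_val_zero, Matrix.cons_val_one, Matrix.head_cons]
  have hc : ((p:ℂ)*((r:ℂ)-(u:ℂ)) + (q:ℂ)*((s:ℂ)-(v:ℂ))) = ((p*(r-u) + q*(s-v) : ℝ) : ℂ) := by
    push_cast; ring
  rw [hc, Complex.ofReal_re]

/-- tightness of the semi-continuity bound, via explicit diagonal qubit states. -/
theorem semicontinuity_tight
    (M ε : ℝ) (hM : 1 < M) (hε0 : 0 ≤ ε) (hε1 : ε ≤ 1 - 1 / M)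
    (ρ σ ω : Matrix (Fin 2) (Fin 2) ℂ)
    (hρ : ρ = Matrix.diagonal ![(1 : ℂ), 0])
    (hσ : σ = Matrix.diagonal ![((1 - ε : ℝ) : ℂ), ((ε : ℝ) : ℂ)])
    (hω : ω = Matrix.diagonal ![((1 / M : ℝ) : ℂ), ((1 - 1 / M : ℝ) : ℂ)]) :
    traceNorm (ρ - σ) / 2 = ε ∧
    ((M : ℂ) • ω - ρ).PosSemidef ∧
    (∀ m : ℝ, m < M → ¬ ((m : ℂ) • ω - ρ).PosSemidef) ∧
    relEnt ρ ω - relEnt σ ω = ε * Real.log (M - 1) + binH ε := by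
  have hM0 : (0:ℝ) < M := by linarith
  have hρ' : ρ = Matrix.diagonal ![((1:ℝ) : ℂ), ((0:ℝ) : ℂ)] := by
    rw [hρ]; norm_num
  refine ⟨?_, ?_, ?_, ?_⟩
  · -- trace norm
    have hX : ρ - σ = Matrix.diagonal ![((ε:ℝ):ℂ), ((-ε:ℝ):ℂ)] := by
      rw [hρ, hσ, Matrix.diagonal_sub]
      refine congrArg Matrix.diagonal ?_
      funext i
      fin_cases i <;> simp <;> push_cast <;> ring
    rw [hX, traceNorm, dif_pos (herm_diag2 ε (-ε))]
    rcases eig_diag2 ε (-ε) (herm_diag2 ε (-ε)) with ⟨h0, h1⟩ | ⟨h0, h1⟩ <;>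
      rw [Fin.sum_univ_two, h0, h1] <;>
      rw [abs_of_nonneg hε0, abs_neg, abs_of_nonneg hε0] <;> ring
  · -- PSD
    have hcalc : (M : ℂ) • ω - ρ = Matrix.diagonal ![((0:ℝ):ℂ), ((M-1:ℝ):ℂ)] := by
      rw [hρ, hω, ← Matrix.diagonal_smul, Matrix.diagonal_sub]
      refine congrArg Matrix.diagonal ?_
      have hMC : (M:ℂ) ≠ 0 := by exact_mod_cast hM0.ne'
      funext i
      fin_cases i <;>
        simp only [Pi.sub_apply, Pi.smul_apply, smul_eq_mul, Matrix.cons_val_zero,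
          Matrix.cons_val_one, Matrix.head_cons] <;> push_cast <;> field_simp <;> ring
    rw [hcalc]
    refine Matrix.posSemidef_diagonal_iff.mpr ?_
    intro i
    fin_cases i <;> simp only [Matrix.cons_val_zero, Matrix.cons_val_one, Matrix.head_cons]
    · exact le_of_eq (by norm_num)
    · exact Complex.zero_le_real.mpr (by linarith)
  · -- strictness
    intro m hm hPSD
    have hcalc : (m : ℂ) • ω - ρ = Matrix.diagonal ![((m/M - 1:ℝ):ℂ), ((m*(1-1/M):ℝ):ℂ)] := by
      rw [hρ, hω, ← Matrix.diagonal_smul, Matrix.diagonal_sub]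
      refine congrArg Matrix.diagonal ?_
      have hMC : (M:ℂ) ≠ 0 := by exact_mod_cast hM0.ne'
      funext i
      fin_cases i <;>
        simp only [Pi.sub_apply, Pi.smul_apply, smul_eq_mul, Matrix.cons_val_zero,
          Matrix.cons_val_one, Matrix.head_cons] <;> push_cast <;> field_simp <;> ring
    rw [hcalc] at hPSD
    have h0 := Matrix.posSemidef_diagonal_iff.mp hPSD 0
    simp only [Matrix.cons_val_zero] at h0
    have hge : (0:ℝ) ≤ m/M - 1 := Complex.zero_le_real.mp h0
    have : M ≤ m := (one_le_div hM0).mp (by linarith)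
    linarith
  · -- relative entropy difference
    have hε' : (1:ℝ) - ε > 0 := by
      have : (1:ℝ)/M > 0 := by positivity
      linarith
    have hmρ : mlog ρ = Matrix.diagonal ![(Real.log 1 : ℂ), (Real.log 0 : ℂ)] := by
      rw [hρ']; exact mlog_diag2 1 0
    have hmσ : mlog σ = Matrix.diagonal ![(Real.log (1-ε) : ℂ), (Real.log ε : ℂ)] := by
      rw [hσ]; exact mlog_diag2 (1-ε) ε
    have hmω : mlog ω = Matrix.diagonal ![(Real.log (1/M) : ℂ), (Real.log (1-1/M) : ℂ)] := by
      rw [hω]; exact mlog_diag2 (1/M) (1-1/M)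
    have hr1 : relEnt ρ ω = 1*(Real.log 1 - Real.log (1/M)) + 0*(Real.log 0 - Real.log (1-1/M)) := by
      rw [relEnt, hmρ, hmω, hρ']
      exact retrace2 1 0 (Real.log 1) (Real.log 0) (Real.log (1/M)) (Real.log (1-1/M))
    have hr2 : relEnt σ ω = (1-ε)*(Real.log (1-ε) - Real.log (1/M))
        + ε*(Real.log ε - Real.log (1-1/M)) := by
      rw [relEnt, hmσ, hmω, hσ]
      exact retrace2 (1-ε) ε (Real.log (1-ε)) (Real.log ε) (Real.log (1/M)) (Real.log (1-1/M))
    rw [hr1, hr2, binH]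
    have l1 : Real.log (1/M) = -Real.log M := by rw [one_div, Real.log_inv]
    have l2 : Real.log (1-1/M) = Real.log (M-1) - Real.log M := by
      rw [show (1 - 1/M : ℝ) = (M-1)/M by field_simp, Real.log_div (by linarith) (by linarith)]
    rw [l1, l2, Real.log_one]
    ring

end QIT
end
end

section
/- Let dA, dB ≥ 1 and let ρ be a bipartite state on ℂ^{dA}⊗ℂ^{dB}. Then ρ ≤ min(dA, dB) · (I_{dA} ⊗ ρ_B), i.e. the matrix min(dA, dB)·(I_{dA} ⊗ ρ_B) − ρ is positive semidefinite, where I_{dA} ⊗ ρ_B denotes the Kronecker product of the dA×dA identity matrix with the B-marginal ρ_B. Equivalently, the max-relative entropy of ρ with respect to (I_{dA}/dA) ⊗ ρ_B is at most log(dA·min(dA, dB)). -/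
set_option maxHeartbeats 1000000


noncomputable section

namespace QIT

open Matrix
open scoped ComplexOrder

variable {n : Type*} [Fintype n] [DecidableEq n]

/-- B-marginal (partial trace over A) of a bipartite matrix. -/
def margB {dA dB : ℕ} (ρ : Matrix (Fin dA × Fin dB) (Fin dA × Fin dB) ℂ) :
    Matrix (Fin dB) (Fin dB) ℂ :=
  Matrix.of fun j j' => ∑ i, ρ (i, j) (i, j')

local notation "conj'" => starRingEnd ℂ

lemma proj_trace_bound {n r : ℕ} (u : Fin r → EuclideanSpace ℂ (Fin n))
    (hON : Orthonormal ℂ u) (C : Matrix (Fin n) (Fin n) ℂ)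
    (hcols : ∀ k, (WithLp.toLp 2 (fun i => C i k)) ∈ Submodule.span ℂ (Set.range u)) :
    Complex.normSq C.trace ≤ (r : ℝ) * ∑ p : Fin n × Fin n, Complex.normSq (C p.1 p.2) := by
  classical
  have hONc : ∀ k k' : Fin r, (∑ i, conj' (u k i) * u k' i) = if k = k' then 1 else 0 := by
    intro k k'
    have h1 := (orthonormal_iff_ite (𝕜 := ℂ)).mp hON k k'
    rw [← h1]
    simp [PiLp.inner_apply, RCLike.inner_apply]
    exact Finset.sum_congr rfl fun _ _ => mul_comm _ _
  set P : Matrix (Fin n) (Fin n) ℂ := Matrix.of fun i i' => ∑ k, u k i * conj' (u k i') with hP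
  have hPx : ∀ x : EuclideanSpace ℂ (Fin n), x ∈ Submodule.span ℂ (Set.range u) →
      ∀ i, (∑ i', P i i' * x i') = x i := by
    intro x hx i
    obtain ⟨c, hc⟩ := (Submodule.mem_span_range_iff_exists_fun ℂ).mp hx
    have hc' : ∀ w, x w = ∑ l, c l * u l w := by
      intro w
      rw [← hc, WithLp.ofLp_sum, Finset.sum_apply]
      exact Finset.sum_congr rfl fun l _ => by simp [PiLp.smul_apply, smul_eq_mul]
    calc (∑ i', P i i' * x i')
        = ∑ i', ∑ l, ∑ l', u l i * conj' (u l i') * (c l' * u l' i') := by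
          refine Finset.sum_congr rfl fun i' _ => ?_
          rw [hP, hc']
          simp only [Matrix.of_apply, Finset.sum_mul, Finset.mul_sum]
          rw [Finset.sum_comm]
      _ = ∑ l, ∑ l', (c l' * (∑ i', conj' (u l i') * u l' i')) * u l i := by
          rw [Finset.sum_comm]
          refine Finset.sum_congr rfl fun l _ => ?_
          rw [Finset.sum_comm]
          refine Finset.sum_congr rfl fun l' _ => ?_
          rw [Finset.mul_sum, Finset.sum_mul]
          exact Finset.sum_congr rfl fun i' _ => by ring
      _ = ∑ l, c l * u l i := by
          refine Finset.sum_congr rfl fun l _ => ?_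
          rw [Finset.sum_eq_single l]
          · rw [hONc]; simp
          · intro l' _ hne; rw [hONc]; simp [Ne.symm hne]
          · simp
      _ = x i := (hc' i).symm
  have hcolP : ∀ i' : Fin n, (WithLp.toLp 2 (fun w => P w i') : EuclideanSpace ℂ (Fin n)) ∈
      Submodule.span ℂ (Set.range u) := by
    intro i'
    have : (WithLp.toLp 2 (fun w => P w i') : EuclideanSpace ℂ (Fin n)) = ∑ k, conj' (u k i') • u k := by
      ext w
      rw [hP]
      simp only [Matrix.of_apply, PiLp.toLp_apply, WithLp.ofLp_sum]
      rw [Finset.sum_apply]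
      exact Finset.sum_congr rfl fun k _ => by simp [mul_comm]
    rw [this]
    exact Submodule.sum_mem _ fun k _ =>
      Submodule.smul_mem _ _ (Submodule.subset_span ⟨k, rfl⟩)
  have hPP : ∀ i i', (∑ w, P i w * P w i') = P i i' := fun i i' =>
    hPx (WithLp.toLp 2 (fun w => P w i')) (hcolP i') i
  have hPherm : ∀ i i', conj' (P i i') = P i' i := by
    intro i i'
    rw [hP]
    simp only [Matrix.of_apply, map_sum, _root_.map_mul, Complex.conj_conj]
    exact Finset.sum_congr rfl fun k _ => by ring
  have htrP : (∑ i, P i i) = (r : ℂ) := by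
    calc (∑ i, P i i) = ∑ i, ∑ k, u k i * conj' (u k i) :=
          Finset.sum_congr rfl fun i _ => by rw [hP]; rfl
      _ = ∑ k, ∑ i, conj' (u k i) * u k i := by
          rw [Finset.sum_comm]
          exact Finset.sum_congr rfl fun k _ => Finset.sum_congr rfl fun i _ => mul_comm _ _
      _ = ∑ _k : Fin r, (1 : ℂ) := Finset.sum_congr rfl fun k _ => by rw [hONc]; simp
      _ = (r : ℂ) := by simp
  have hPsum : ∑ p : Fin n × Fin n, Complex.normSq (P p.1 p.2) = r := by
    have : ((∑ p : Fin n × Fin n, Complex.normSq (P p.1 p.2) : ℝ) : ℂ) = (r : ℂ) := by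
      push_cast
      calc (∑ p : Fin n × Fin n, (Complex.normSq (P p.1 p.2) : ℂ))
          = ∑ i, ∑ i', conj' (P i i') * P i i' := by
            rw [Fintype.sum_prod_type]
            exact Finset.sum_congr rfl fun i _ => Finset.sum_congr rfl fun i' _ => by
              rw [mul_comm, Complex.mul_conj]
        _ = ∑ i', ∑ i, P i' i * P i i' := by
            rw [Finset.sum_comm]
            exact Finset.sum_congr rfl fun i' _ => Finset.sum_congr rfl fun i _ => by
              rw [hPherm]
        _ = ∑ i', P i' i' := Finset.sum_congr rfl fun i' _ => hPP i' i'
        _ = (r : ℂ) := htrP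
    exact_mod_cast this
  have htr : C.trace = ∑ p : Fin n × Fin n, conj' (P p.1 p.2) * C p.1 p.2 := by
    rw [Fintype.sum_prod_type]
    calc C.trace = ∑ k, C k k := rfl
      _ = ∑ k, ∑ i, P k i * C i k :=
          Finset.sum_congr rfl fun k _ => (hPx (WithLp.toLp 2 (fun i => C i k)) (hcols k) k).symm
      _ = ∑ i, ∑ k, conj' (P i k) * C i k := by
          rw [Finset.sum_comm]
          exact Finset.sum_congr rfl fun i _ => Finset.sum_congr rfl fun k _ => by
            rw [hPherm]
  -- Cauchy–Schwarz
  have habs : ‖C.trace‖ ≤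
      ∑ p : Fin n × Fin n, ‖P p.1 p.2‖ * ‖C p.1 p.2‖ := by
    rw [htr]
    refine (norm_sum_le _ _).trans ?_
    refine le_of_eq (Finset.sum_congr rfl fun p _ => ?_)
    rw [norm_mul, Complex.norm_conj]
  have hCS := Finset.sum_mul_sq_le_sq_mul_sq Finset.univ
      (fun p : Fin n × Fin n => ‖P p.1 p.2‖)
      (fun p : Fin n × Fin n => ‖C p.1 p.2‖)
  calc Complex.normSq C.trace = ‖C.trace‖ ^ 2 := (Complex.sq_norm _).symm
    _ ≤ (∑ p : Fin n × Fin n, ‖P p.1 p.2‖ * ‖C p.1 p.2‖) ^ 2 := by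
        apply pow_le_pow_left₀ (norm_nonneg _) habs
    _ ≤ (∑ p : Fin n × Fin n, ‖P p.1 p.2‖ ^ 2) *
          (∑ p : Fin n × Fin n, ‖C p.1 p.2‖ ^ 2) := hCS
    _ = (r : ℝ) * ∑ p : Fin n × Fin n, Complex.normSq (C p.1 p.2) := by
        rw [show (∑ p : Fin n × Fin n, ‖P p.1 p.2‖ ^ 2) = (r : ℝ) by
          rw [← hPsum]; exact Finset.sum_congr rfl fun p _ => Complex.sq_norm _]
        congr 1
        exact Finset.sum_congr rfl fun p _ => Complex.sq_norm _


lemma trace_normSq_le {n m : ℕ} (X : Matrix (Fin n) (Fin m) ℂ) (Y : Matrix (Fin m) (Fin n) ℂ) :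
    Complex.normSq (X * Y).trace ≤
      (min n m : ℝ) * ∑ p : Fin n × Fin n, Complex.normSq ((X * Y) p.1 p.2) := by
  classical
  set cols : Fin m → EuclideanSpace ℂ (Fin n) := fun j => WithLp.toLp 2 (fun i => X i j) with hcols_def
  set K : Submodule ℂ (EuclideanSpace ℂ (Fin n)) := Submodule.span ℂ (Set.range cols) with hK
  have hKm : Module.finrank ℂ K ≤ m := by
    refine (finrank_span_le_card (R := ℂ) (Set.range cols)).trans ?_
    rw [Set.toFinset_card]
    simpa using Fintype.card_range_le cols
  have hKn : Module.finrank ℂ K ≤ n := by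
    have := Submodule.finrank_le K
    rwa [finrank_euclideanSpace_fin] at this
  let b := stdOrthonormalBasis ℂ K
  set u : Fin (Module.finrank ℂ K) → EuclideanSpace ℂ (Fin n) :=
    fun k => ((b k : K) : EuclideanSpace ℂ (Fin n)) with hu
  have hON : Orthonormal ℂ u := b.orthonormal.comp_linearIsometry K.subtypeₗᵢ
  have hmemK : ∀ y : EuclideanSpace ℂ (Fin n), y ∈ K → y ∈ Submodule.span ℂ (Set.range u) := by
    intro y hy
    have hrep := b.sum_repr (⟨y, hy⟩ : K)
    have h2 : y = ∑ k, b.repr (⟨y, hy⟩ : K) k • u k := by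
      have h3 := congrArg (Subtype.val) hrep
      simp only [Submodule.coe_sum, SetLike.val_smul] at h3
      exact h3.symm
    rw [h2]
    exact Submodule.sum_mem _ fun k _ =>
      Submodule.smul_mem _ _ (Submodule.subset_span ⟨k, rfl⟩)
  have hcolsC : ∀ k, (WithLp.toLp 2 (fun i => (X * Y) i k) : EuclideanSpace ℂ (Fin n)) ∈
      Submodule.span ℂ (Set.range u) := by
    intro k
    apply hmemK
    have : (WithLp.toLp 2 (fun i => (X * Y) i k) : EuclideanSpace ℂ (Fin n)) = ∑ j, Y j k • cols j := by
      ext i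
      rw [WithLp.ofLp_sum, Finset.sum_apply]
      simp [Matrix.mul_apply, hcols_def, PiLp.smul_apply, smul_eq_mul, mul_comm]
    rw [this]
    exact Submodule.sum_mem _ fun j _ =>
      Submodule.smul_mem _ _ (Submodule.subset_span ⟨j, rfl⟩)
  have hkey := proj_trace_bound u hON (X * Y) hcolsC
  refine hkey.trans ?_
  apply mul_le_mul_of_nonneg_right
  · have : Module.finrank ℂ K ≤ min n m := le_min hKn hKm
    exact_mod_cast this
  · exact Finset.sum_nonneg fun p _ => Complex.normSq_nonneg _


open Kronecker in
/-- ρ_{AB} ≤ min(dA,dB) · (I_A ⊗ ρ_B). -/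
theorem state_le_min_smul_id_kron_margB
    {dA dB : ℕ} (hA : 1 ≤ dA) (hB : 1 ≤ dB)
    (ρ : Matrix (Fin dA × Fin dB) (Fin dA × Fin dB) ℂ)
    (hρ : IsState ρ) :
    ((((min dA dB : ℕ) : ℂ)) • ((1 : Matrix (Fin dA) (Fin dA) ℂ) ⊗ₖ margB ρ) - ρ).PosSemidef := by
  classical
  obtain ⟨hpsd, -⟩ := hρ
  obtain ⟨R, hR⟩ : ∃ R : Matrix (Fin dA × Fin dB) (Fin dA × Fin dB) ℂ, ρ = Rᴴ * R := by
    open scoped MatrixOrder in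
    exact CStarAlgebra.nonneg_iff_eq_star_mul_self.mp hpsd.nonneg
  have hρ_apply : ∀ a b, ρ a b = ∑ α, conj' (R α a) * R α b := by
    intro a b
    rw [hR, Matrix.mul_apply]
    exact Finset.sum_congr rfl fun α _ => by rw [Matrix.conjTranspose_apply]; rfl
  set σ := margB ρ with hσdef
  have hσ_apply : ∀ j j', σ j j' = ∑ i, ρ (i, j) (i, j') := fun j j' => rfl
  have hσH : σ.IsHermitian := by
    ext j j'
    rw [Matrix.conjTranspose_apply, hσ_apply, hσ_apply, star_sum]
    exact Finset.sum_congr rfl fun i _ => hpsd.1.apply (i, j) (i, j')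
  have hkronH : ((1 : Matrix (Fin dA) (Fin dA) ℂ) ⊗ₖ σ).IsHermitian := by
    ext ⟨i, j⟩ ⟨i', j'⟩
    rw [Matrix.conjTranspose_apply, Matrix.kroneckerMap_apply, Matrix.kroneckerMap_apply,
      star_mul', hσH.apply j j', Matrix.isHermitian_one.apply i i', mul_comm]
  have hDH : ((((min dA dB : ℕ) : ℂ)) • ((1 : Matrix (Fin dA) (Fin dA) ℂ) ⊗ₖ σ) - ρ).IsHermitian := by
    show _ᴴ = _
    rw [Matrix.conjTranspose_sub, Matrix.conjTranspose_smul, star_natCast, hkronH.eq, hpsd.1.eq]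
  refine Matrix.PosSemidef.of_dotProduct_mulVec_nonneg hDH fun v => ?_
  set Xv : Matrix (Fin dA) (Fin dB) ℂ := Matrix.of fun i j => v (i, j) with hXv
  set Y : (Fin dA × Fin dB) → Matrix (Fin dB) (Fin dA) ℂ :=
    fun α => Matrix.of fun j k => R α (k, j) with hY
  set E : (Fin dA × Fin dB) → Matrix (Fin dA) (Fin dA) ℂ := fun α => Xv * Y α with hE
  have hE_apply : ∀ α i k, E α i k = ∑ j, v (i, j) * R α (k, j) := by
    intro α i k
    rw [hE]
    simp [Matrix.mul_apply, hXv, hY]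
  -- Claim A : quadratic form of ρ
  have htrE : ∀ α, (E α).trace = (R *ᵥ v) α := by
    intro α
    rw [Matrix.trace]
    calc (∑ i, (E α).diag i) = ∑ i, ∑ j, v (i, j) * R α (i, j) :=
          Finset.sum_congr rfl fun i _ => hE_apply α i i
      _ = ∑ i, ∑ j, R α (i, j) * v (i, j) :=
          Finset.sum_congr rfl fun i _ => Finset.sum_congr rfl fun j _ => mul_comm _ _
      _ = (R *ᵥ v) α := by
          rw [Matrix.mulVec, dotProduct, Fintype.sum_prod_type]
  have hQ2 : star v ⬝ᵥ (ρ *ᵥ v) = ∑ α, (Complex.normSq ((E α).trace) : ℂ) := by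
    conv_lhs => rw [hR]
    rw [← Matrix.mulVec_mulVec, Matrix.dotProduct_mulVec, ← Matrix.star_mulVec,
      dotProduct]
    refine Finset.sum_congr rfl fun α _ => ?_
    rw [htrE, Pi.star_apply, mul_comm]
    exact Complex.mul_conj _
  -- Claim B : quadratic form of 1 ⊗ σ
  have hmv : ∀ i j, (((1 : Matrix (Fin dA) (Fin dA) ℂ) ⊗ₖ σ) *ᵥ v) (i, j)
      = ∑ j', σ j j' * v (i, j') := by
    intro i j
    rw [Matrix.mulVec, dotProduct, Fintype.sum_prod_type]
    rw [Finset.sum_eq_single i]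
    · exact Finset.sum_congr rfl fun j' _ => by
        rw [Matrix.kroneckerMap_apply, Matrix.one_apply_eq, one_mul]
    · intro i' _ hne
      apply Finset.sum_eq_zero
      intro j' _
      rw [Matrix.kroneckerMap_apply, Matrix.one_apply_ne (Ne.symm hne), zero_mul, zero_mul]
    · simp
  have hQ1 : star v ⬝ᵥ (((1 : Matrix (Fin dA) (Fin dA) ℂ) ⊗ₖ σ) *ᵥ v)
      = ∑ α, ∑ p : Fin dA × Fin dA, (Complex.normSq (E α p.1 p.2) : ℂ) := by
    have hL1 : star v ⬝ᵥ (((1 : Matrix (Fin dA) (Fin dA) ℂ) ⊗ₖ σ) *ᵥ v)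
        = ∑ i, ∑ j, ∑ j', ∑ α, ∑ k,
            conj' (v (i, j)) * (conj' (R α (k, j)) * R α (k, j') * v (i, j')) := by
      rw [dotProduct, Fintype.sum_prod_type]
      refine Finset.sum_congr rfl fun i _ => Finset.sum_congr rfl fun j _ => ?_
      rw [hmv, Finset.mul_sum]
      refine Finset.sum_congr rfl fun j' _ => ?_
      have hσjj : σ j j' = ∑ α, ∑ k, conj' (R α (k, j)) * R α (k, j') := by
        rw [hσ_apply]
        rw [show (∑ i, ρ (i, j) (i, j')) = ∑ i, ∑ α, conj' (R α (i, j)) * R α (i, j') from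
          Finset.sum_congr rfl fun i _ => hρ_apply (i, j) (i, j')]
        exact Finset.sum_comm
      rw [Pi.star_apply, hσjj, Finset.sum_mul, Finset.mul_sum]
      refine Finset.sum_congr rfl fun α _ => ?_
      rw [Finset.sum_mul, Finset.mul_sum]
      exact Finset.sum_congr rfl fun k _ => by
        rw [show star (v (i, j)) = conj' (v (i, j)) from rfl]
    rw [hL1]
    -- move the α-sum to the outside
    have hswap1 : ∀ i, (∑ j, ∑ j', ∑ α, ∑ k,
            conj' (v (i, j)) * (conj' (R α (k, j)) * R α (k, j') * v (i, j')))
        = ∑ α, ∑ j, ∑ j', ∑ k,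
            conj' (v (i, j)) * (conj' (R α (k, j)) * R α (k, j') * v (i, j')) := by
      intro i
      calc (∑ j, ∑ j', ∑ α, ∑ k,
              conj' (v (i, j)) * (conj' (R α (k, j)) * R α (k, j') * v (i, j')))
          = ∑ j, ∑ α, ∑ j', ∑ k,
              conj' (v (i, j)) * (conj' (R α (k, j)) * R α (k, j') * v (i, j')) :=
            Finset.sum_congr rfl fun j _ => Finset.sum_comm
        _ = ∑ α, ∑ j, ∑ j', ∑ k,
              conj' (v (i, j)) * (conj' (R α (k, j)) * R α (k, j') * v (i, j')) :=
            Finset.sum_comm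
    have hswap : (∑ i, ∑ j, ∑ j', ∑ α, ∑ k,
            conj' (v (i, j)) * (conj' (R α (k, j)) * R α (k, j') * v (i, j')))
        = ∑ α, ∑ i, ∑ j, ∑ j', ∑ k,
            conj' (v (i, j)) * (conj' (R α (k, j)) * R α (k, j') * v (i, j')) :=
      (Finset.sum_congr rfl fun i _ => hswap1 i).trans Finset.sum_comm
    rw [hswap]
    refine Finset.sum_congr rfl fun α _ => ?_
    -- per α
    rw [Fintype.sum_prod_type]
    calc (∑ i, ∑ j, ∑ j', ∑ k,
            conj' (v (i, j)) * (conj' (R α (k, j)) * R α (k, j') * v (i, j')))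
        = ∑ i, ∑ k, ∑ j, ∑ j',
            (conj' (v (i, j)) * conj' (R α (k, j))) * (v (i, j') * R α (k, j')) := by
          refine Finset.sum_congr rfl fun i _ => ?_
          rw [show (∑ j, ∑ j', ∑ k, conj' (v (i, j)) * (conj' (R α (k, j)) * R α (k, j') * v (i, j')))
              = ∑ j, ∑ k, ∑ j', conj' (v (i, j)) * (conj' (R α (k, j)) * R α (k, j') * v (i, j'))
            from Finset.sum_congr rfl fun j _ => Finset.sum_comm]
          rw [Finset.sum_comm]
          exact Finset.sum_congr rfl fun k _ => Finset.sum_congr rfl fun j _ =>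
            Finset.sum_congr rfl fun j' _ => by ring
      _ = ∑ i, ∑ k, (Complex.normSq (E α i k) : ℂ) := by
          refine Finset.sum_congr rfl fun i _ => Finset.sum_congr rfl fun k _ => ?_
          rw [← Finset.sum_mul_sum]
          have hconj : (∑ j, conj' (v (i, j)) * conj' (R α (k, j))) = conj' (E α i k) := by
            rw [hE_apply, map_sum]
            exact Finset.sum_congr rfl fun j _ => (map_mul _ _ _).symm
          rw [hconj, ← hE_apply α i k, mul_comm, Complex.mul_conj]
  -- combine
  have expand : star v ⬝ᵥ ((((((min dA dB : ℕ) : ℂ)) • ((1 : Matrix (Fin dA) (Fin dA) ℂ) ⊗ₖ σ) - ρ)) *ᵥ v)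
      = (((min dA dB : ℕ) : ℂ)) * (star v ⬝ᵥ (((1 : Matrix (Fin dA) (Fin dA) ℂ) ⊗ₖ σ) *ᵥ v))
        - star v ⬝ᵥ (ρ *ᵥ v) := by
    rw [Matrix.sub_mulVec, dotProduct_sub, Matrix.smul_mulVec,
      dotProduct_smul, smul_eq_mul]
  rw [expand, hQ1, hQ2]
  have hkeyα : ∀ α : Fin dA × Fin dB, Complex.normSq ((E α).trace)
      ≤ (((min dA dB : ℕ) : ℝ)) * ∑ p : Fin dA × Fin dA, Complex.normSq (E α p.1 p.2) := by
    intro α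
    have h := trace_normSq_le Xv (Y α)
    have hEα : E α = Xv * Y α := rfl
    rw [hEα]
    exact_mod_cast h
  have hreal : (((min dA dB : ℕ) : ℂ)) * (∑ α, ∑ p : Fin dA × Fin dA, (Complex.normSq (E α p.1 p.2) : ℂ))
      - (∑ α, (Complex.normSq ((E α).trace) : ℂ))
      = (((((min dA dB : ℕ) : ℝ)) * (∑ α, ∑ p : Fin dA × Fin dA, Complex.normSq (E α p.1 p.2))
          - ∑ α, Complex.normSq ((E α).trace) : ℝ) : ℂ) := by
    push_cast [← Nat.cast_min]
    ring
  rw [hreal]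
  rw [Complex.zero_le_real]
  rw [sub_nonneg, Finset.mul_sum]
  exact Finset.sum_le_sum fun α _ => hkeyα α


end QIT
end
end

section
/- For all Hermitian d×d complex matrices A and B, Tr(A + B)₊ ≤ Tr A₊ + Tr B₊, i.e. the trace of the positive part is subadditive on Hermitian matrices. -/
noncomputable section

namespace QIT

open Matrix
open scoped ComplexOrder

variable {n : Type*} [Fintype n] [DecidableEq n]

lemma psd_diag_nonneg_s10 {d : ℕ} {M : Matrix (Fin d) (Fin d) ℂ} (hM : M.PosSemidef) (i : Fin d) :
    0 ≤ M i i := by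
  have := hM.dotProduct_mulVec_nonneg (Pi.single i 1)
  simpa [Matrix.mulVec_single_one, dotProduct, Pi.single_apply] using this

lemma trace_diagonal_mul {d : ℕ} (f : Fin d → ℂ) (M : Matrix (Fin d) (Fin d) ℂ) :
    (Matrix.diagonal f * M).trace = ∑ i, f i * M i i := by
  simp [Matrix.trace, Matrix.diag, Matrix.diagonal_mul]

/-- Key lemma: for Hermitian A and 0 ≤ T ≤ 1, Re Tr(A T) ≤ Tr A₊. -/
lemma re_trace_mul_le {d : ℕ} {A T : Matrix (Fin d) (Fin d) ℂ}
    (hA : A.IsHermitian) (hT : T.PosSemidef) (h1T : (1 - T).PosSemidef) :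
    ((A * T).trace).re ≤ ∑ i, max (hA.eigenvalues i) 0 := by
  set U : Matrix (Fin d) (Fin d) ℂ := (hA.eigenvectorUnitary : Matrix (Fin d) (Fin d) ℂ) with hU
  have hWW : U * star U = 1 := Matrix.mem_unitaryGroup_iff.mp hA.eigenvectorUnitary.2
  have hWW' : star U * U = 1 := Matrix.mem_unitaryGroup_iff'.mp hA.eigenvectorUnitary.2
  set M : Matrix (Fin d) (Fin d) ℂ := star U * T * U with hM
  have hMpsd : M.PosSemidef := by
    have := hT.conjTranspose_mul_mul_same U
    simpa [hM, Matrix.star_eq_conjTranspose] using this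
  have hM1psd : (1 - M).PosSemidef := by
    have := h1T.conjTranspose_mul_mul_same U
    have heq : Uᴴ * (1 - T) * U = 1 - M := by
      simp only [Matrix.mul_sub, Matrix.sub_mul, Matrix.mul_one, hM,
        ← Matrix.star_eq_conjTranspose, hWW']
    rwa [heq] at this
  have htr : (A * T).trace = (Matrix.diagonal (fun i => (hA.eigenvalues i : ℂ)) * M).trace := by
    conv_lhs => rw [hA.spectral_theorem, Unitary.conjStarAlgAut_apply]
    have h1 : U * Matrix.diagonal (RCLike.ofReal ∘ hA.eigenvalues) * star U * T
        = U * ((Matrix.diagonal fun i => (hA.eigenvalues i : ℂ)) * (star U * T)) := by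
      have : (Matrix.diagonal (RCLike.ofReal ∘ hA.eigenvalues) : Matrix (Fin d) (Fin d) ℂ)
          = Matrix.diagonal (fun i => (hA.eigenvalues i : ℂ)) := rfl
      rw [this]; noncomm_ring
    rw [h1, Matrix.trace_mul_comm, hM]
    congr 1
    noncomm_ring
  rw [htr, trace_diagonal_mul, Complex.re_sum]
  apply Finset.sum_le_sum
  intro i _
  have h0 : 0 ≤ (M i i).re := by
    have h := Complex.le_def.mp (psd_diag_nonneg_s10 hMpsd i)
    simpa using h.1
  have h1 : (M i i).re ≤ 1 := by
    have h := Complex.le_def.mp (psd_diag_nonneg_s10 hM1psd i)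
    simp only [Matrix.sub_apply, Matrix.one_apply_eq, Complex.sub_re, Complex.one_re,
      Complex.zero_re] at h
    linarith [h.1]
  have hre : ((hA.eigenvalues i : ℂ) * M i i).re = hA.eigenvalues i * (M i i).re := by
    simp [Complex.mul_re]
  rw [hre]
  rcases le_or_gt 0 (hA.eigenvalues i) with hpos | hneg
  · calc hA.eigenvalues i * (M i i).re ≤ hA.eigenvalues i * 1 :=
          mul_le_mul_of_nonneg_left h1 hpos
    _ = hA.eigenvalues i := mul_one _
    _ ≤ max (hA.eigenvalues i) 0 := le_max_left _ _
  · calc hA.eigenvalues i * (M i i).re ≤ 0 := mul_nonpos_of_nonpos_of_nonneg hneg.le h0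
    _ ≤ max (hA.eigenvalues i) 0 := le_max_right _ _

/-- subadditivity of the trace of the positive part. -/
theorem trPos_add_le
    {d : ℕ} (A B : Matrix (Fin d) (Fin d) ℂ)
    (hA : A.IsHermitian) (hB : B.IsHermitian) :
    trPos (A + B) ≤ trPos A + trPos B := by
  have hAB : (A + B).IsHermitian := hA.add hB
  set W : Matrix (Fin d) (Fin d) ℂ := (hAB.eigenvectorUnitary : Matrix (Fin d) (Fin d) ℂ) with hW
  have hWW : W * star W = 1 := Matrix.mem_unitaryGroup_iff.mp hAB.eigenvectorUnitary.2
  have hWW' : star W * W = 1 := Matrix.mem_unitaryGroup_iff'.mp hAB.eigenvectorUnitary.2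
  set e : Fin d → ℂ := fun i => if 0 ≤ hAB.eigenvalues i then 1 else 0 with he
  set T : Matrix (Fin d) (Fin d) ℂ := W * Matrix.diagonal e * star W with hTdef
  have hepos : ∀ i, 0 ≤ e i := by
    intro i; rw [he]; dsimp only; split <;> norm_num
  have hT : T.PosSemidef := by
    have hd : (Matrix.diagonal e).PosSemidef := Matrix.posSemidef_diagonal_iff.mpr hepos
    have := hd.mul_mul_conjTranspose_same W
    simpa [hTdef, Matrix.star_eq_conjTranspose] using this
  have h1T : (1 - T).PosSemidef := by
    have heq : 1 - T = W * Matrix.diagonal (fun i => 1 - e i) * star W := by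
      have : Matrix.diagonal (fun i => 1 - e i) = 1 - Matrix.diagonal e := by
        rw [← Matrix.diagonal_one, ← Matrix.diagonal_sub]
      rw [this, Matrix.mul_sub, Matrix.sub_mul, Matrix.mul_one, hWW, hTdef]
    rw [heq]
    have hd : (Matrix.diagonal (fun i => 1 - e i)).PosSemidef := by
      refine Matrix.posSemidef_diagonal_iff.mpr fun i => ?_
      rw [he]; dsimp only; split <;> norm_num
    have := hd.mul_mul_conjTranspose_same W
    simpa [Matrix.star_eq_conjTranspose] using this
  -- trace of (A+B) * T equals trPos (A+B)
  have htr : (((A + B) * T).trace).re = ∑ i, max (hAB.eigenvalues i) 0 := by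
    have key : (A + B) * T = W * Matrix.diagonal (fun i => (hAB.eigenvalues i : ℂ) * e i) * star W := by
      conv_lhs => rw [hAB.spectral_theorem]
      rw [hTdef, ← Matrix.diagonal_mul_diagonal]
      have : (Matrix.diagonal (RCLike.ofReal ∘ hAB.eigenvalues) : Matrix (Fin d) (Fin d) ℂ)
          = Matrix.diagonal (fun i => (hAB.eigenvalues i : ℂ)) := rfl
      rw [this]
      calc W * Matrix.diagonal (fun i => (hAB.eigenvalues i : ℂ)) * star W *
            (W * Matrix.diagonal e * star W)
          = W * Matrix.diagonal (fun i => (hAB.eigenvalues i : ℂ)) * (star W * W) *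
            Matrix.diagonal e * star W := by noncomm_ring
        _ = _ := by rw [hWW']; noncomm_ring
    rw [key, Matrix.trace_mul_comm, ← Matrix.mul_assoc, hWW', Matrix.one_mul,
      Matrix.trace_diagonal, Complex.re_sum]
    apply Finset.sum_congr rfl
    intro i _
    rw [he]; dsimp only
    split
    · next h => simp [max_eq_left h]
    · next h => simp [max_eq_right (le_of_not_ge h)]
  have hsplit : (((A + B) * T).trace).re = ((A * T).trace).re + ((B * T).trace).re := by
    rw [Matrix.add_mul, Matrix.trace_add, Complex.add_re]
  have hAle := re_trace_mul_le hA hT h1T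
  have hBle := re_trace_mul_le hB hT h1T
  rw [trPos, trPos, trPos, dif_pos hAB, dif_pos hA, dif_pos hB, ← htr, hsplit]
  exact add_le_add hAle hBle

end QIT
end
end
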